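/- Let K be a field, γ ∈ K, and let h₁(t,z) ∈ K⟨t,z⟩ be a nonzero polynomial which is homogeneous of positive degree with respect to t. Then h₁(−(γyz + zy), z) ≠ 0 in K⟨x,y,z⟩; consequently there is no polynomial h₂(x,z) ∈ K⟨x,z⟩ not involving y such that h₁((x−γy)z − zy, z) = h₂(x,z). -/

import Mathlib

open MonoidAlgebra

noncomputable section

/-- The free associative algebra `K⟨x,y,z⟩`. -/
abbrev FA (K : Type) [Field K] := MonoidAlgebra K (FreeMonoid (Fin 3))

/-- The free associative algebra `K⟨t,z⟩`; `t` is letter `0`, `z` is letter `1`. -/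
abbrev FA2 (K : Type) [Field K] := MonoidAlgebra K (FreeMonoid (Fin 2))

variable (K : Type) [Field K]

/-- The generators `x = Xv 0`, `y = Xv 1`, `z = Xv 2`. -/
def Xv (i : Fin 3) : FA K := MonoidAlgebra.of K (FreeMonoid (Fin 3)) (FreeMonoid.of i)

/-- The substitution homomorphism `K⟨t,z⟩ → K⟨x,y,z⟩` sending `t ↦ f 0`, `z ↦ f 1`. -/
def subst2 (f : Fin 2 → FA K) : FA2 K →ₐ[K] FA K :=
  MonoidAlgebra.lift K (FA K) (FreeMonoid (Fin 2)) (FreeMonoid.lift f)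

namespace H1Proof

open FreeMonoid

/-- weight: sum of positions of occurrences of the letter `1` (i.e. `y`). -/
def wt : List (Fin 3) → ℕ
  | [] => 0
  | _ :: r => wt r + r.count 1

@[simp] lemma wt_nil : wt [] = 0 := rfl
@[simp] lemma wt_cons (a : Fin 3) (r : List (Fin 3)) : wt (a :: r) = wt r + r.count 1 := rfl

lemma wt12 (r : List (Fin 3)) : wt (1 :: 2 :: r) = wt r + 2 * r.count 1 := by
  simp [List.count_cons]; omega
lemma wt21 (r : List (Fin 3)) : wt (2 :: 1 :: r) = wt r + 2 * r.count 1 + 1 := by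
  simp [List.count_cons]; omega
lemma wt2 (r : List (Fin 3)) : wt (2 :: r) = wt r + r.count 1 := by simp

/-- leading-word map: `t ↦ z y`, `z ↦ z`. -/
def phi : List (Fin 2) → List (Fin 3)
  | [] => []
  | i :: l => if i = 0 then 2 :: 1 :: phi l else 2 :: phi l

@[simp] lemma phi_nil : phi [] = [] := rfl
lemma phi_cons_zero (l : List (Fin 2)) : phi (0 :: l) = 2 :: 1 :: phi l := rfl
lemma phi_cons_one (l : List (Fin 2)) : phi (1 :: l) = 2 :: phi l := by simp [phi]

lemma fin2cases (i : Fin 2) : i = 0 ∨ i = 1 := by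
  rcases i with ⟨_ | _, h⟩
  · exact Or.inl rfl
  · exact Or.inr (by simp [Fin.ext_iff]; omega)

lemma phi_count : ∀ l : List (Fin 2), (phi l).count 1 = l.count 0
  | [] => rfl
  | i :: l => by
    rcases fin2cases i with rfl | rfl <;>
      simp [phi_cons_zero, phi_cons_one, List.count_cons, phi_count l]

lemma phi_head : ∀ l : List (Fin 2), phi l = [] ∨ ∃ r, phi l = 2 :: r
  | [] => Or.inl rfl
  | i :: l => by
    rcases fin2cases i with rfl | rfl
    · exact Or.inr ⟨_, phi_cons_zero l⟩
    · exact Or.inr ⟨_, phi_cons_one l⟩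

lemma phi_inj : ∀ l l' : List (Fin 2), phi l = phi l' → l = l'
  | [], [], _ => rfl
  | [], i :: l', h => by
    rcases fin2cases i with rfl | rfl <;> simp [phi_cons_zero, phi_cons_one] at h
  | i :: l, [], h => by
    rcases fin2cases i with rfl | rfl <;> simp [phi_cons_zero, phi_cons_one] at h
  | i :: l, j :: l', h => by
    rcases fin2cases i with rfl | rfl <;> rcases fin2cases j with rfl | rfl <;>
      simp only [phi_cons_zero, phi_cons_one, List.cons.injEq] at h
    · simp [phi_inj l l' h.2.2]
    · exfalso
      rcases phi_head l' with h' | ⟨r, h'⟩ <;> rw [h'] at h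
      · exact (List.cons_ne_nil _ _) h.2
      · exact absurd (List.head_eq_of_cons_eq h.2.symm ▸ rfl : (2:Fin 3) = 1) (by decide)
    · exfalso
      rcases phi_head l with h' | ⟨r, h'⟩ <;> rw [h'] at h
      · exact (List.cons_ne_nil _ _) h.2.symm
      · exact absurd (List.head_eq_of_cons_eq h.2 ▸ rfl : (2:Fin 3) = 1) (by decide)
    · simp [phi_inj l l' h.2]


variable {K : Type} [Field K]

/-- the substitution vector: `t ↦ -(γ y z + z y)`, `z ↦ z`. -/
def fv (K : Type) [Field K] (γ : K) : Fin 2 → FA K :=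
  ![-(γ • (Xv K 1 * Xv K 2) + Xv K 2 * Xv K 1), Xv K 2]

lemma Xv_eq (i : Fin 3) : Xv K i = single (of i) (1 : K) := rfl

lemma fv_zero (γ : K) :
    fv K γ 0 = single (ofList [1,2]) (-γ) + single (ofList [2,1]) (-1 : K) := by
  have h12 : (of (1 : Fin 3)) * of 2 = ofList [1,2] := rfl
  have h21 : (of (2 : Fin 3)) * of 1 = ofList [2,1] := rfl
  have h1 : Xv K 1 * Xv K 2 = single (ofList [1,2]) (1 : K) := by
    rw [Xv_eq, Xv_eq, MonoidAlgebra.single_mul_single, one_mul, h12]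
  have h2 : Xv K 2 * Xv K 1 = single (ofList [2,1]) (1 : K) := by
    rw [Xv_eq, Xv_eq, MonoidAlgebra.single_mul_single, one_mul, h21]
  show -(γ • (Xv K 1 * Xv K 2) + Xv K 2 * Xv K 1) = _
  rw [h1, h2, MonoidAlgebra.smul_single, smul_eq_mul, mul_one, neg_add,
    MonoidAlgebra.single_neg, MonoidAlgebra.single_neg]

lemma fv_one (γ : K) : fv K γ 1 = single (ofList [2]) (1 : K) := rfl

/-- product of the images of the letters of `l`. -/
def Pl (γ : K) (l : List (Fin 2)) : FA K := (l.map (fv K γ)).prod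

@[simp] lemma Pl_nil (γ : K) : Pl γ [] = 1 := rfl
lemma Pl_cons (γ : K) (i : Fin 2) (l : List (Fin 2)) :
    Pl γ (i :: l) = fv K γ i * Pl γ l := by simp [Pl]

lemma single_mul_apply_cancel (a : FreeMonoid (Fin 3)) (c : K) (g : FA K)
    (b : FreeMonoid (Fin 3)) : (single a c * g).coeff (a * b) = c * g.coeff b :=
  MonoidAlgebra.coeff_single_mul_eq_mul_coeff (x := g) b fun _ _ => mul_left_cancel_iff

lemma mem_support_single_mul {a : FreeMonoid (Fin 3)} {c : K} {g : FA K}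
    {v : FreeMonoid (Fin 3)} (h : v ∈ (single a c * g).coeff.support) :
    ∃ b ∈ g.coeff.support, v = a * b := by
  classical
  obtain ⟨b, hb, rfl⟩ := Finset.mem_image.mp (MonoidAlgebra.support_coeff_single_mul_subset g c a h)
  exact ⟨b, hb, rfl⟩

lemma Pl_main (γ : K) : ∀ l : List (Fin 2),
    (Pl γ l).coeff (ofList (phi l)) = (-1 : K) ^ l.count 0 ∧
    ∀ v ∈ (Pl γ l).coeff.support, (toList v).count 1 = l.count 0 ∧
      wt (toList v) ≤ wt (phi l) ∧ (wt (toList v) = wt (phi l) → v = ofList (phi l))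
  | [] => by
    constructor
    · simp [MonoidAlgebra.one_def]
    · intro v hv
      have hv1 : v = 1 := by
        have := MonoidAlgebra.support_coeff_one_subset (k := K) (G := FreeMonoid (Fin 3)) hv
        simpa using this
      subst hv1
      refine ⟨rfl, le_refl _, fun _ => rfl⟩
  | i :: l => by
    classical
    obtain ⟨ih1, ih2⟩ := Pl_main γ l
    rcases fin2cases i with rfl | rfl
    · -- t-case
      rw [Pl_cons, fv_zero, add_mul]
      set A := single (ofList ([1,2] : List (Fin 3))) (-γ) * Pl γ l with hA
      set B := single (ofList ([2,1] : List (Fin 3))) (-1 : K) * Pl γ l with hB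
      have htgt : ofList (phi (0 :: l)) = ofList ([2,1] : List (Fin 3)) * ofList (phi l) := by
        rw [phi_cons_zero, ← ofList_append]; rfl
      have hcount : (phi l).count 1 = l.count 0 := phi_count l
      constructor
      · have hAz : A.coeff (ofList (phi (0 :: l))) = 0 := by
          by_contra hne
          have hv : ofList (phi (0 :: l)) ∈ A.coeff.support := Finsupp.mem_support_iff.mpr hne
          obtain ⟨b, _, hb⟩ := mem_support_single_mul hv
          have : phi (0 :: l) = 1 :: 2 :: toList b := congrArg toList hb
          rw [phi_cons_zero] at this
          exact absurd (List.head_eq_of_cons_eq this) (by decide)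
        have hBz : B.coeff (ofList (phi (0 :: l))) = (-1 : K) * (Pl γ l).coeff (ofList (phi l)) := by
          rw [htgt, hB, single_mul_apply_cancel]
        rw [MonoidAlgebra.coeff_add, Finsupp.add_apply, hAz, hBz, zero_add, ih1]
        rw [List.count_cons_self]
        ring
      · intro v hv
        rw [MonoidAlgebra.coeff_add] at hv
        rcases Finset.mem_union.mp (Finsupp.support_add hv) with hvA | hvB
        · obtain ⟨b, hbs, rfl⟩ := mem_support_single_mul hvA
          obtain ⟨hc, hle, _⟩ := ih2 b hbs
          have htl : toList (ofList ([1,2] : List (Fin 3)) * b) = 1 :: 2 :: toList b := rfl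
          rw [htl]
          constructor
          · simp [List.count_cons, hc]
          constructor
          · rw [phi_cons_zero, wt12, wt21, hcount, hc]
            omega
          · intro heq
            exfalso
            rw [phi_cons_zero, wt12, wt21, hcount, hc] at heq
            omega
        · obtain ⟨b, hbs, rfl⟩ := mem_support_single_mul hvB
          obtain ⟨hc, hle, heq⟩ := ih2 b hbs
          have htl : toList (ofList ([2,1] : List (Fin 3)) * b) = 2 :: 1 :: toList b := rfl
          rw [htl]
          constructor
          · simp [List.count_cons, hc]
          constructor
          · rw [phi_cons_zero, wt21, wt21, hcount, hc]
            omega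
          · intro he
            rw [phi_cons_zero, wt21, wt21, hcount, hc] at he
            have hb : wt (toList b) = wt (phi l) := by omega
            rw [htgt, heq hb]
    · -- z-case
      rw [Pl_cons, fv_one]
      have htgt : ofList (phi (1 :: l)) = ofList ([2] : List (Fin 3)) * ofList (phi l) := by
        rw [phi_cons_one, ← ofList_append]; rfl
      have hcount : (phi l).count 1 = l.count 0 := phi_count l
      constructor
      · rw [htgt, single_mul_apply_cancel, ih1, one_mul, List.count_cons]
        simp
      · intro v hv
        obtain ⟨b, hbs, rfl⟩ := mem_support_single_mul hv
        obtain ⟨hc, hle, heq⟩ := ih2 b hbs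
        have htl : toList (ofList ([2] : List (Fin 3)) * b) = 2 :: toList b := rfl
        rw [htl]
        constructor
        · simp [List.count_cons, hc]
        constructor
        · rw [phi_cons_one, wt2, wt2, hcount, hc]
          omega
        · intro he
          rw [phi_cons_one, wt2, wt2, hcount, hc] at he
          have hb : wt (toList b) = wt (phi l) := by omega
          rw [htgt, heq hb]


lemma liftPl (γ : K) (u : FreeMonoid (Fin 2)) :
    FreeMonoid.lift (fv K γ) u = Pl γ (toList u) :=
  FreeMonoid.lift_apply _ _

lemma subst_fv_props (γ : K) (h₁ : FA2 K) (hne : h₁ ≠ 0) :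
    subst2 K (fv K γ) h₁ ≠ 0 ∧
    ∀ v ∈ (subst2 K (fv K γ) h₁).coeff.support, ∃ u ∈ h₁.coeff.support,
      (toList v).count 1 = (toList u).count 0 := by
  classical
  have hrep : subst2 K (fv K γ) h₁
      = h₁.coeff.sum fun u c => c • (FreeMonoid.lift (fv K γ) u) :=
    MonoidAlgebra.lift_apply _ _
  constructor
  · obtain ⟨u₀, hu₀, hmax⟩ := Finset.exists_max_image h₁.coeff.support
      (fun u => wt (phi (toList u))) (Finsupp.support_nonempty_iff.mpr (MonoidAlgebra.coeff_eq_zero.not.mpr hne))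
    set v₀ : FreeMonoid (Fin 3) := ofList (phi (toList u₀)) with hv₀
    have hval : (subst2 K (fv K γ) h₁).coeff v₀ = h₁.coeff u₀ * (-1) ^ ((toList u₀).count 0) := by
      rw [hrep, MonoidAlgebra.coeff_finsuppSum, Finsupp.sum_apply, Finsupp.sum,
        Finset.sum_eq_single_of_mem u₀ hu₀ ?side]
      · rw [MonoidAlgebra.coeff_smul_apply, liftPl, (Pl_main γ (toList u₀)).1, smul_eq_mul]
      case side =>
        intro u hu hne'
        rw [MonoidAlgebra.coeff_smul_apply, liftPl]
        have hz : (Pl γ (toList u)).coeff v₀ = 0 := by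
          by_contra h0
          have hvs : v₀ ∈ (Pl γ (toList u)).coeff.support := Finsupp.mem_support_iff.mpr h0
          obtain ⟨_, hle, heqc⟩ := (Pl_main γ (toList u)).2 v₀ hvs
          have ht : toList v₀ = phi (toList u₀) := rfl
          rw [ht] at hle heqc
          have heq : wt (phi (toList u₀)) = wt (phi (toList u)) :=
            le_antisymm hle (hmax u hu)
          have := heqc heq
          have hphi : phi (toList u₀) = phi (toList u) := ofList.injective this
          exact hne' (toList.injective (phi_inj _ _ hphi.symm))
        rw [hz, smul_zero]
    intro h0
    rw [h0] at hval
    have h1 : h₁.coeff u₀ ≠ 0 := Finsupp.mem_support_iff.mp hu₀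
    have h2 : ((-1 : K)) ^ ((toList u₀).count 0) ≠ 0 := pow_ne_zero _ (by norm_num)
    exact mul_ne_zero h1 h2 (by simpa using hval.symm)
  · intro v hv
    rw [hrep, MonoidAlgebra.coeff_finsuppSum] at hv
    obtain ⟨u, hu, hv'⟩ := Finset.mem_biUnion.mp (Finsupp.support_sum hv)
    rw [MonoidAlgebra.coeff_smul] at hv'
    have hv'' : v ∈ (FreeMonoid.lift (fv K γ) u).coeff.support := Finsupp.support_smul hv'
    rw [liftPl] at hv''
    exact ⟨u, hu, ((Pl_main γ (toList u)).2 v hv'').1⟩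

end H1Proof

open H1Proof FreeMonoid

/-- Let `γ ∈ K` and let `h₁(t,z) ∈ K⟨t,z⟩` be a nonzero polynomial, homogeneous of positive
degree with respect to `t`.  Then `h₁(−(γyz + zy), z) ≠ 0` in `K⟨x,y,z⟩`; consequently there
is no polynomial `h₂(x,z)` in the subalgebra generated by `x` and `z` such that
`h₁((x−γy)z − zy, z) = h₂`. -/
theorem h1_subst_ne_zero (γ : K) (h₁ : FA2 K) (hne : h₁ ≠ 0) (m : ℕ) (hm : 0 < m)
    (hhom : ∀ w ∈ h₁.coeff.support, (FreeMonoid.toList w).count 0 = m) :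
    subst2 K ![-(γ • (Xv K 1 * Xv K 2) + Xv K 2 * Xv K 1), Xv K 2] h₁ ≠ 0 ∧
    ¬ ∃ h₂ ∈ Algebra.adjoin K {Xv K 0, Xv K 2},
        subst2 K ![(Xv K 0 - γ • Xv K 1) * Xv K 2 - Xv K 2 * Xv K 1, Xv K 2] h₁ = h₂ := by
  classical
  have hN := subst_fv_props γ h₁ hne
  have hfv : ![-(γ • (Xv K 1 * Xv K 2) + Xv K 2 * Xv K 1), Xv K 2] = fv K γ := rfl
  rw [hfv]
  refine ⟨hN.1, ?_⟩
  rintro ⟨h₂, hmem, heqn⟩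
  set fL : Fin 2 → FA K :=
    ![(Xv K 0 - γ • Xv K 1) * Xv K 2 - Xv K 2 * Xv K 1, Xv K 2] with hfL
  set g : Fin 3 → FA K := ![0, Xv K 1, Xv K 2] with hg
  set π : FA K →ₐ[K] FA K :=
    MonoidAlgebra.lift K (FA K) (FreeMonoid (Fin 3)) (FreeMonoid.lift g) with hπ
  have hπ_of : ∀ i : Fin 3, π (Xv K i) = g i := by
    intro i
    rw [hπ]
    show MonoidAlgebra.lift K (FA K) (FreeMonoid (Fin 3)) (FreeMonoid.lift g)
      (MonoidAlgebra.of K (FreeMonoid (Fin 3)) (FreeMonoid.of i)) = g i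
    rw [MonoidAlgebra.lift_of, FreeMonoid.lift_eval_of]
  have hcomp : π.comp (subst2 K fL) = subst2 K (fv K γ) := by
    refine MonoidAlgebra.algHom_ext' ?_ (Subsingleton.elim _ _)
    apply FreeMonoid.hom_eq
    intro i
    show π (MonoidAlgebra.lift K (FA K) (FreeMonoid (Fin 2)) (FreeMonoid.lift fL)
        (MonoidAlgebra.of K (FreeMonoid (Fin 2)) (FreeMonoid.of i)))
      = MonoidAlgebra.lift K (FA K) (FreeMonoid (Fin 2)) (FreeMonoid.lift (fv K γ))
        (MonoidAlgebra.of K (FreeMonoid (Fin 2)) (FreeMonoid.of i))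
    rw [MonoidAlgebra.lift_of, MonoidAlgebra.lift_of, FreeMonoid.lift_eval_of,
      FreeMonoid.lift_eval_of]
    rcases fin2cases i with rfl | rfl
    · show π ((Xv K 0 - γ • Xv K 1) * Xv K 2 - Xv K 2 * Xv K 1)
        = -(γ • (Xv K 1 * Xv K 2) + Xv K 2 * Xv K 1)
      rw [map_sub, map_mul, map_sub, map_smul, map_mul, hπ_of, hπ_of, hπ_of]
      show ((0 : FA K) - γ • Xv K 1) * Xv K 2 - Xv K 2 * Xv K 1 = _
      rw [zero_sub, neg_mul, smul_mul_assoc, neg_add, sub_eq_add_neg]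
    · show π (Xv K 2) = Xv K 2
      rw [hπ_of]
      rfl
  have hNeq : subst2 K (fv K γ) h₁ = π h₂ := by
    rw [← heqn, ← hcomp]; rfl
  have hπsupp : ∀ v ∈ (π h₂).coeff.support, (toList v).count 1 = 0 := by
    refine Algebra.adjoin_induction
      (p := fun x _ => ∀ v ∈ (π x).coeff.support, (toList v).count 1 = 0)
      ?_ ?_ ?_ ?_ hmem
    · intro x hx
      rcases hx with rfl | rfl
      · intro v hv
        have : π (Xv K 0) = 0 := by rw [hπ_of]; rfl
        rw [this] at hv
        simp at hv
      · intro v hv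
        have : π (Xv K 2) = single (of (2 : Fin 3)) (1 : K) := by rw [hπ_of]; rfl
        rw [this, MonoidAlgebra.coeff_single] at hv
        have : v = of (2 : Fin 3) := by
          have := Finsupp.support_single_subset hv
          simpa using this
        subst this
        rfl
    · intro r v hv
      have : π ((algebraMap K (FA K)) r) = r • (1 : FA K) := by
        rw [AlgHom.commutes, Algebra.algebraMap_eq_smul_one]
      rw [this, MonoidAlgebra.coeff_smul] at hv
      have hv1 : v ∈ ((1 : FA K)).coeff.support := Finsupp.support_smul hv
      have : v = 1 := by
        have := MonoidAlgebra.support_coeff_one_subset (k := K) (G := FreeMonoid (Fin 3)) hv1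
        simpa using this
      subst this
      rfl
    · intro a b _ _ ha hb v hv
      rw [map_add, MonoidAlgebra.coeff_add] at hv
      rcases Finset.mem_union.mp (Finsupp.support_add hv) with h | h
      · exact ha v h
      · exact hb v h
    · intro a b _ _ ha hb v hv
      rw [map_mul] at hv
      have hsub := MonoidAlgebra.support_coeff_mul_subset (π a) (π b) hv
      obtain ⟨v₁, hv₁, v₂, hv₂, rfl⟩ := Finset.mem_mul.mp hsub
      rw [toList_mul, List.count_append, ha v₁ hv₁, hb v₂ hv₂]
  obtain ⟨v, hv⟩ := Finsupp.support_nonempty_iff.mpr (MonoidAlgebra.coeff_eq_zero.not.mpr hN.1)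
  obtain ⟨u, hu, hcnt⟩ := hN.2 v hv
  have h0 : (toList v).count 1 = 0 := hπsupp v (by rwa [← hNeq])
  rw [hhom u hu] at hcnt
  omega
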